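/- Let r ≥ 1, let α_1, …, α_r ∈ ℂ, and let F : ℂ^r → ℂ be the entire function F(t) = exp(∑_{i=1}^r α_i t_i). For each i let D_i be the operator sending a function h : ℂ^r → ℂ to the function t ↦ t_i · (∂h/∂t_i)(t). Then applying the pairwise-difference operators (D_i − D_j), for all pairs 1 ≤ i < j ≤ r composed in lexicographic order, to F yields the function t ↦ exp(∑_{i=1}^r α_i t_i) · ∏_{1 ≤ i < j ≤ r} (α_i t_i − α_j t_j). -/

import Mathlib

/-- The operator `D_i` sending `h : ℂʳ → ℂ` to `t ↦ t_i · ∂h/∂t_i(t)`. -/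
noncomputable def thetaOp (r : ℕ) (i : Fin r) :
    ((Fin r → ℂ) → ℂ) → ((Fin r → ℂ) → ℂ) :=
  fun h t => t i * deriv (fun z : ℂ => h (Function.update t i z)) (t i)

/-- The list of pairs `(i, j)` with `i < j` in `Fin r`, in lexicographic
order. -/
def lexPairs (r : ℕ) : List (Fin r × Fin r) :=
  (List.finRange r).flatMap fun i =>
    ((List.finRange r).filter fun j => i < j).map fun j => (i, j)


open MvPolynomial

noncomputable section

variable {r : ℕ}

/-- The algebraic model of `thetaOp`: `δ_i P = X_i • (P + ∂_i P)`, as a linear endomorphism. -/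
noncomputable def deltaL (r : ℕ) (i : Fin r) :
    Module.End ℂ (MvPolynomial (Fin r) ℂ) :=
  (LinearMap.mulLeft ℂ (X i : MvPolynomial (Fin r) ℂ)).comp
    (LinearMap.id + (pderiv i).toLinearMap)

lemma deltaL_apply (i : Fin r) (P : MvPolynomial (Fin r) ℂ) :
    deltaL r i P = X i * P + X i * pderiv i P := by
  simp [deltaL, mul_add]

lemma pderiv_pderiv_comm (i j : Fin r) (P : MvPolynomial (Fin r) ℂ) :
    pderiv i (pderiv j P) = pderiv j (pderiv i P) := by
  induction P using MvPolynomial.induction_on with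
  | C a => simp
  | add p q hp hq => simp [hp, hq]
  | mul_X p k ih =>
    simp only [pderiv_mul, pderiv_X, map_add, ih]
    by_cases hik : k = i <;> by_cases hjk : k = j <;>
      simp [hik, hjk, Pi.single_apply, pderiv_mul, ih] <;> split_ifs <;> simp <;> ring

lemma pderiv_deltaL (i j : Fin r) (hij : i ≠ j) (P : MvPolynomial (Fin r) ℂ) :
    pderiv i (deltaL r j P) = deltaL r j (pderiv i P) := by
  simp only [deltaL_apply, map_add, pderiv_mul, pderiv_X_of_ne (Ne.symm hij),
    pderiv_pderiv_comm i j, zero_mul, zero_add]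

lemma deltaL_comm (i j : Fin r) : Commute (deltaL r i) (deltaL r j) := by
  rcases eq_or_ne i j with rfl | hij
  · exact Commute.refl _
  · apply LinearMap.ext; intro P
    have h1 := pderiv_deltaL i j hij
    have h2 := pderiv_deltaL j i hij.symm
    simp only [Module.End.mul_apply, deltaL_apply, map_add, pderiv_mul,
      pderiv_X_of_ne hij, pderiv_X_of_ne hij.symm, zero_mul, zero_add,
      pderiv_pderiv_comm i j]
    ring

/-- Touchard-type polynomials: `touch k i = δ_i^k 1`. -/
noncomputable def touch (r : ℕ) (k : ℕ) (i : Fin r) : MvPolynomial (Fin r) ℂ :=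
  ((deltaL r i) ^ k) 1

lemma pderiv_touch_ne (i j : Fin r) (hij : i ≠ j) (k : ℕ) :
    pderiv i (touch r k j) = 0 := by
  induction k with
  | zero => simp [touch]
  | succ n ih =>
    have : touch r (n+1) j = deltaL r j (touch r n j) := by
      rw [touch, touch, pow_succ', Module.End.mul_apply]
    rw [this, pderiv_deltaL i j hij, ih, map_zero]

lemma deltaL_mul_right (i : Fin r) (P Q : MvPolynomial (Fin r) ℂ)
    (hQ : pderiv i Q = 0) : deltaL r i (P * Q) = deltaL r i P * Q := by
  simp only [deltaL_apply, pderiv_mul, hQ, mul_zero, add_zero]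
  ring

lemma deltaL_pow_mul (i : Fin r) (k : ℕ) (Q : MvPolynomial (Fin r) ℂ)
    (hQ : pderiv i Q = 0) : ((deltaL r i) ^ k) Q = touch r k i * Q := by
  induction k with
  | zero => simp [touch]
  | succ n ih =>
    have h1 : ((deltaL r i) ^ (n+1)) Q = deltaL r i (((deltaL r i) ^ n) Q) := by
      rw [pow_succ', Module.End.mul_apply]
    rw [h1, ih, deltaL_mul_right i _ _ hQ]
    congr 1
    rw [touch, touch, pow_succ', Module.End.mul_apply]

/-- Stirling-like coefficients of the Touchard polynomials. -/
def tc : ℕ → ℕ → ℕ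
  | 0, 0 => 1
  | 0, _+1 => 0
  | _+1, 0 => 0
  | k+1, m+1 => tc k m + (m+1) * tc k (m+1)

lemma tc_eq_zero_of_lt : ∀ {k m : ℕ}, k < m → tc k m = 0
  | 0, 0, h => absurd h (lt_irrefl 0)
  | 0, _+1, _ => rfl
  | _+1, 0, h => by omega
  | k+1, m+1, h => by
    have h1 : k < m := by omega
    have h2 : k < m+1 := by omega
    simp [tc, tc_eq_zero_of_lt h1, tc_eq_zero_of_lt h2]

lemma tc_diag : ∀ k : ℕ, tc k k = 1
  | 0 => rfl
  | k+1 => by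
    simp [tc, tc_diag k, tc_eq_zero_of_lt (Nat.lt_succ_self k)]

lemma deltaL_C_mul_X_pow (i : Fin r) (a : ℂ) (m : ℕ) :
    deltaL r i (C a * X i ^ m) =
      C a * X i ^ (m+1) + (m : MvPolynomial (Fin r) ℂ) * (C a * X i ^ m) := by
  rw [deltaL_apply]
  rw [pderiv_mul, pderiv_C, pderiv_pow, pderiv_X_self]
  cases m with
  | zero => simp [mul_comm]
  | succ n =>
    simp only [Nat.cast_add, Nat.cast_one, zero_mul, zero_add, mul_one]
    push_cast
    ring_nf
    try rw [pow_succ]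
    try ring

lemma touch_expand (k : ℕ) (i : Fin r) :
    touch r k i =
      ∑ m ∈ Finset.range (k+1), (tc k m : MvPolynomial (Fin r) ℂ) * X i ^ m := by
  induction k with
  | zero => simp [touch, tc]
  | succ n ih =>
    have hstep : touch r (n+1) i = deltaL r i (touch r n i) := by
      rw [touch, touch, pow_succ', Module.End.mul_apply]
    rw [hstep, ih, map_sum]
    have hterm : ∀ m : ℕ,
        deltaL r i ((tc n m : MvPolynomial (Fin r) ℂ) * X i ^ m) =
          (tc n m : MvPolynomial (Fin r) ℂ) * X i ^ (m+1)
            + (m : MvPolynomial (Fin r) ℂ) * ((tc n m : MvPolynomial (Fin r) ℂ) * X i ^ m) := by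
      intro m
      have := deltaL_C_mul_X_pow i ((tc n m : ℂ)) m
      simpa [MvPolynomial.C_eq_coe_nat] using this
    calc ∑ m ∈ Finset.range (n+1),
          deltaL r i ((tc n m : MvPolynomial (Fin r) ℂ) * X i ^ m)
        = ∑ m ∈ Finset.range (n+1),
            ((tc n m : MvPolynomial (Fin r) ℂ) * X i ^ (m+1)
              + (m : MvPolynomial (Fin r) ℂ)
                  * ((tc n m : MvPolynomial (Fin r) ℂ) * X i ^ m)) := by
          exact Finset.sum_congr rfl fun m _ => hterm m
      _ = ∑ m ∈ Finset.range (n+2), (tc (n+1) m : MvPolynomial (Fin r) ℂ) * X i ^ m := by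
          rw [Finset.sum_add_distrib]
          rw [Finset.sum_range_succ' (fun m => (tc (n+1) m : MvPolynomial (Fin r) ℂ) * X i ^ m) (n+1)]
          have h0 : ((tc (n+1) 0 : MvPolynomial (Fin r) ℂ)) * X i ^ 0 = 0 := by
            simp [tc]
          rw [h0, add_zero]
          have hsplit : ∀ m : ℕ,
              (tc (n+1) (m+1) : MvPolynomial (Fin r) ℂ) * X i ^ (m+1) =
                (tc n m : MvPolynomial (Fin r) ℂ) * X i ^ (m+1)
                  + ((m+1 : ℕ) : MvPolynomial (Fin r) ℂ) * ((tc n (m+1) : MvPolynomial (Fin r) ℂ) * X i ^ (m+1)) := by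
            intro m
            show ((tc n m + (m+1) * tc n (m+1) : ℕ) : MvPolynomial (Fin r) ℂ) * X i ^ (m+1) = _
            push_cast
            ring
          rw [Finset.sum_congr rfl fun m _ => hsplit m, Finset.sum_add_distrib]
          congr 1
          -- ∑_{m∈range(n+1)} (m+1) * tc n (m+1) X^{m+1} = ∑_{m∈range(n+1)} m * tc n m X^m
          have := Finset.sum_range_succ'
            (fun m => (m : MvPolynomial (Fin r) ℂ) * ((tc n m : MvPolynomial (Fin r) ℂ) * X i ^ m)) (n+1)
          rw [show (((0:ℕ) : MvPolynomial (Fin r) ℂ) * ((tc n 0 : MvPolynomial (Fin r) ℂ) * X i ^ 0)) = 0 by simp] at this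
          rw [add_zero] at this
          have hlast : ∑ m ∈ Finset.range (n+2),
              (m : MvPolynomial (Fin r) ℂ) * ((tc n m : MvPolynomial (Fin r) ℂ) * X i ^ m)
              = ∑ m ∈ Finset.range (n+1),
              (m : MvPolynomial (Fin r) ℂ) * ((tc n m : MvPolynomial (Fin r) ℂ) * X i ^ m) := by
            rw [Finset.sum_range_succ, tc_eq_zero_of_lt (Nat.lt_succ_self n)]
            simp
          rw [← this, hlast]

/-! ### Determinant computation -/

lemma det_tc_one (r : ℕ) :
    Matrix.det (Matrix.of fun k m : Fin r =>
      ((tc (k:ℕ) (m:ℕ) : ℕ) : MvPolynomial (Fin r) ℂ)) = 1 := by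
  rw [Matrix.det_of_lowerTriangular]
  · apply Finset.prod_eq_one
    intro k _
    simp [tc_diag]
  · intro i j h
    have : (i : ℕ) < (j : ℕ) := by
      simpa [OrderDual.toDual_lt_toDual] using h
    simp [Matrix.of_apply, tc_eq_zero_of_lt this]

lemma touch_entry (r : ℕ) (k j : Fin r) :
    touch r (k:ℕ) j =
      ∑ m : Fin r, ((tc (k:ℕ) (m:ℕ) : ℕ) : MvPolynomial (Fin r) ℂ) * X j ^ (m:ℕ) := by
  rw [touch_expand, Fin.sum_univ_eq_sum_range
    (fun m => ((tc (k:ℕ) m : ℕ) : MvPolynomial (Fin r) ℂ) * X j ^ m) r]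
  apply Finset.sum_subset
  · exact Finset.range_subset_range.mpr k.isLt
  · intro m _ hm
    have : (k:ℕ) < m := by simpa using hm
    simp [tc_eq_zero_of_lt this]

lemma det_touch (r : ℕ) :
    Matrix.det (Matrix.of fun k j : Fin r => touch r (k:ℕ) j)
      = ∏ i : Fin r, ∏ j ∈ Finset.Ioi i, (X j - X i : MvPolynomial (Fin r) ℂ) := by
  have hM : (Matrix.of fun k j : Fin r => touch r (k:ℕ) j)
      = (Matrix.of fun k m : Fin r => ((tc (k:ℕ) (m:ℕ) : ℕ) : MvPolynomial (Fin r) ℂ))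
        * Matrix.transpose (Matrix.vandermonde (fun j : Fin r => (X j : MvPolynomial (Fin r) ℂ))) := by
    funext k j
    simp only [Matrix.of_apply, Matrix.mul_apply, Matrix.transpose_apply,
      Matrix.vandermonde_apply]
    exact touch_entry r k j
  rw [hM, Matrix.det_mul, Matrix.det_transpose, Matrix.det_vandermonde, det_tc_one, one_mul]

/-! ### Reindexing helpers -/

lemma prod_filter_lt {M : Type*} [CommMonoid M] {n : ℕ} (f : Fin n → Fin n → M) :
    ∏ p ∈ Finset.univ.filter (fun p : Fin n × Fin n => p.1 < p.2), f p.1 p.2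
      = ∏ i, ∏ j ∈ Finset.Ioi i, f i j := by
  rw [Finset.prod_sigma' Finset.univ (fun i => Finset.Ioi i) f]
  refine Finset.prod_nbij' (fun p => ⟨p.1, p.2⟩) (fun x => (x.1, x.2)) ?_ ?_ ?_ ?_ ?_ <;>
    simp +contextual [Finset.mem_sigma, Finset.mem_Ioi, Finset.mem_filter]

lemma prod_Ioi_sub_swap {R : Type*} [CommRing R] {n : ℕ} (g : Fin n → R) :
    (∏ i, ∏ j ∈ Finset.Ioi i, (g i - g j))
      = ((-1 : ℤ) ^ (∑ i : Fin n, (Finset.Ioi i).card)) •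
          ∏ i, ∏ j ∈ Finset.Ioi i, (g j - g i) := by
  rw [zsmul_eq_mul]
  push_cast
  rw [← Finset.prod_pow_eq_pow_sum, ← Finset.prod_mul_distrib]
  apply Finset.prod_congr rfl
  intro i _
  rw [← Finset.prod_const, ← Finset.prod_mul_distrib]
  apply Finset.prod_congr rfl
  intro j _
  ring

/-! ### lexPairs facts -/


lemma lexPairs_mem {r : ℕ} (p : Fin r × Fin r) :
    p ∈ lexPairs r ↔ p.1 < p.2 := by
  obtain ⟨a, b⟩ := p
  simp only [lexPairs, List.mem_flatMap, List.mem_filter, List.mem_map, List.mem_finRange,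
    decide_eq_true_eq, Prod.mk.injEq]
  constructor
  · rintro ⟨i, _, j, hj, rfl, rfl⟩; exact hj.2
  · intro h; exact ⟨a, trivial, b, ⟨trivial, h⟩, rfl, rfl⟩

lemma lexPairs_nodup (r : ℕ) : (lexPairs r).Nodup := by
  rw [lexPairs, List.nodup_flatMap]
  constructor
  · intro i _
    exact ((List.nodup_finRange r).filter _).map
      (fun a b h => by simpa using congrArg Prod.snd h)
  · have h := List.nodup_finRange r
    rw [List.Nodup] at h
    apply h.imp
    intro a b hab
    intro x hx hx'
    simp only [List.mem_map, List.mem_filter] at hx hx'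
    obtain ⟨j, _, rfl⟩ := hx
    obtain ⟨j', _, h2⟩ := hx'
    exact hab (congrArg Prod.fst h2.symm)

lemma lexPairs_toFinset (r : ℕ) :
    (lexPairs r).toFinset
      = Finset.univ.filter (fun p : Fin r × Fin r => p.1 < p.2) := by
  ext p
  simp [List.mem_toFinset, lexPairs_mem]

lemma foldr_eq_prod_apply {r : ℕ} (L : List (Fin r × Fin r)) (P : MvPolynomial (Fin r) ℂ) :
    L.foldr (fun p Q => deltaL r p.1 Q - deltaL r p.2 Q) P
      = ((L.map fun p => deltaL r p.1 - deltaL r p.2).prod) P := by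
  induction L with
  | nil => simp
  | cons a L ih =>
    simp only [List.foldr_cons, List.map_cons, List.prod_cons, Module.End.mul_apply, ih,
      LinearMap.sub_apply]

lemma pderiv_prod_touch {r : ℕ} (a : Fin r) (e : Fin r → ℕ) :
    ∀ (s : Finset (Fin r)), a ∉ s → pderiv a (∏ i ∈ s, touch r (e i) i) = 0 := by
  intro s
  induction s using Finset.induction_on with
  | empty => simp
  | @insert b s hbs ih =>
    intro ha
    rw [Finset.prod_insert hbs, pderiv_mul,
      pderiv_touch_ne a b (fun h => ha (h ▸ Finset.mem_insert_self b s)) (e b),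
      ih (fun h => ha (Finset.mem_insert_of_mem h)), zero_mul, mul_zero, add_zero]


/-! ### The moment map `rep` -/

noncomputable def rep (r : ℕ) : MvPolynomial (Fin r) ℂ →+ MvPolynomial (Fin r) ℂ where
  toFun Q := Finsupp.sum (AddMonoidAlgebra.coeff Q) fun e c => c • ∏ j, touch r (e j) j
  map_zero' := Finsupp.sum_zero_index
  map_add' P Q := by
    show Finsupp.sum (AddMonoidAlgebra.coeff (P + Q)) (fun e c => c • ∏ j, touch r (e j) j)
      = Finsupp.sum (AddMonoidAlgebra.coeff P) (fun e c => c • ∏ j, touch r (e j) j)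
        + Finsupp.sum (AddMonoidAlgebra.coeff Q) (fun e c => c • ∏ j, touch r (e j) j)
    rw [AddMonoidAlgebra.coeff_add]
    exact Finsupp.sum_add_index (fun e _ => by simp) (fun e _ c1 c2 => add_smul c1 c2 _)

lemma rep_monomial (r : ℕ) (e : (Fin r) →₀ ℕ) (c : ℂ) :
    rep r (monomial e c) = c • ∏ j, touch r (e j) j := by
  show Finsupp.sum (AddMonoidAlgebra.coeff (monomial e c)) (fun e c => c • ∏ j, touch r (e j) j)
    = c • ∏ j, touch r (e j) j
  rw [MvPolynomial.sum_monomial_eq]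
  simp

lemma touch_succ (r : ℕ) (k : ℕ) (i : Fin r) :
    touch r (k+1) i = deltaL r i (touch r k i) := by
  rw [touch, touch, pow_succ', Module.End.mul_apply]

lemma rep_X_mul (r : ℕ) (i : Fin r) (Q : MvPolynomial (Fin r) ℂ) :
    rep r (X i * Q) = deltaL r i (rep r Q) := by
  induction Q using MvPolynomial.induction_on' with
  | add P Q hP hQ => rw [mul_add, map_add, map_add, map_add, hP, hQ]
  | monomial e c =>
    have hL : (X i : MvPolynomial (Fin r) ℂ) * monomial e c
        = monomial (Finsupp.single i 1 + e) c := by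
      rw [MvPolynomial.monomial_single_add, pow_one]
    rw [hL, rep_monomial, rep_monomial, map_smul]
    congr 1
    -- split off the i-th factor on both sides
    rw [← Finset.mul_prod_erase Finset.univ _ (Finset.mem_univ i),
      ← Finset.mul_prod_erase Finset.univ (fun j => touch r (e j) j) (Finset.mem_univ i)]
    have herase : ∀ j ∈ Finset.univ.erase i,
        touch r ((Finsupp.single i 1 + e : Fin r →₀ ℕ) j) j = touch r (e j) j := by
      intro j hj
      have hji : j ≠ i := (Finset.mem_erase.mp hj).1
      rw [Finsupp.add_apply, Finsupp.single_apply, if_neg (fun h => hji h.symm), zero_add]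
    rw [Finset.prod_congr rfl herase]
    have hstep : deltaL r i ((touch r (e i) i) * ∏ j ∈ Finset.univ.erase i, touch r (e j) j)
        = (deltaL r i (touch r (e i) i)) * ∏ j ∈ Finset.univ.erase i, touch r (e j) j := by
      apply deltaL_mul_right
      exact pderiv_prod_touch i (fun j => e j) _ (Finset.notMem_erase i Finset.univ)
    rw [hstep, ← touch_succ]
    have : (Finsupp.single i 1 + e : Fin r →₀ ℕ) i = e i + 1 := by
      rw [Finsupp.add_apply, Finsupp.single_apply, if_pos rfl, add_comm]
    rw [this]

lemma rep_one (r : ℕ) : rep r (1 : MvPolynomial (Fin r) ℂ) = 1 := by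
  have h1 : (1 : MvPolynomial (Fin r) ℂ) = monomial 0 1 := by
    rw [← MvPolynomial.C_1, MvPolynomial.C_apply]
  rw [h1, rep_monomial]
  simp [touch]

lemma rep_prod_X_pow (r : ℕ) (e : Fin r → ℕ) :
    rep r (∏ i, (X i : MvPolynomial (Fin r) ℂ) ^ e i) = ∏ j, touch r (e j) j := by
  have h1 : (∏ i, (X i : MvPolynomial (Fin r) ℂ) ^ e i)
      = monomial (Finsupp.equivFunOnFinite.symm e) 1 := by
    rw [MvPolynomial.monomial_eq, MvPolynomial.C_1, one_mul]
    rw [Finsupp.prod_fintype _ _ (fun i => pow_zero _)]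
    rfl
  rw [h1, rep_monomial, one_smul]
  rfl

lemma foldr_rep (r : ℕ) (L : List (Fin r × Fin r)) :
    L.foldr (fun p Q => deltaL r p.1 Q - deltaL r p.2 Q) 1
      = rep r ((L.map fun p => (X p.1 - X p.2 : MvPolynomial (Fin r) ℂ)).prod) := by
  induction L with
  | nil => simp [rep_one]
  | cons a L ih =>
    rw [List.foldr_cons, ih, List.map_cons, List.prod_cons, sub_mul, map_sub,
      rep_X_mul, rep_X_mul]

lemma fold_poly (r : ℕ) :
    (lexPairs r).foldr (fun p Q => deltaL r p.1 Q - deltaL r p.2 Q) 1 =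
      ∏ p ∈ Finset.univ.filter (fun p : Fin r × Fin r => p.1 < p.2),
        (X p.1 - X p.2 : MvPolynomial (Fin r) ℂ) := by
  classical
  rw [foldr_rep]
  have h1 : ((lexPairs r).map fun p => (X p.1 - X p.2 : MvPolynomial (Fin r) ℂ)).prod
      = ∏ p ∈ Finset.univ.filter (fun p : Fin r × Fin r => p.1 < p.2),
          (X p.1 - X p.2 : MvPolynomial (Fin r) ℂ) := by
    rw [← lexPairs_toFinset]
    exact (List.prod_toFinset _ (lexPairs_nodup r)).symm
  rw [h1]
  set K := ∑ i : Fin r, (Finset.Ioi (i : Fin r)).card with hK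
  have h2 : (∏ p ∈ Finset.univ.filter (fun p : Fin r × Fin r => p.1 < p.2),
        (X p.1 - X p.2 : MvPolynomial (Fin r) ℂ))
      = ((-1:ℤ)^K) • Matrix.det
          (Matrix.vandermonde (fun i : Fin r => (X i : MvPolynomial (Fin r) ℂ))) := by
    rw [prod_filter_lt (fun i j => (X i - X j : MvPolynomial (Fin r) ℂ)),
      prod_Ioi_sub_swap, Matrix.det_vandermonde]
  rw [h2, map_zsmul, Matrix.det_apply, map_sum]
  have h3 : ∀ σ : Equiv.Perm (Fin r),
      rep r (Equiv.Perm.sign σ •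
          ∏ i, Matrix.vandermonde (fun i : Fin r => (X i : MvPolynomial (Fin r) ℂ)) (σ i) i)
        = Equiv.Perm.sign σ • ∏ i, touch r ((σ⁻¹ i : Fin r) : ℕ) i := by
    intro σ
    rw [Units.smul_def, map_zsmul, Units.smul_def]
    congr 1
    have hx : (∏ i, Matrix.vandermonde (fun i : Fin r => (X i : MvPolynomial (Fin r) ℂ)) (σ i) i)
        = ∏ i, (X i : MvPolynomial (Fin r) ℂ) ^ ((σ⁻¹ i : Fin r) : ℕ) := by
      rw [← Equiv.prod_comp σ
        (fun k => (X k : MvPolynomial (Fin r) ℂ) ^ ((σ⁻¹ k : Fin r) : ℕ))]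
      apply Finset.prod_congr rfl
      intro i _
      simp [Matrix.vandermonde_apply]
    rw [hx, rep_prod_X_pow]
  rw [Finset.sum_congr rfl (fun σ _ => h3 σ)]
  have h4 : ∑ σ : Equiv.Perm (Fin r), Equiv.Perm.sign σ • ∏ i, touch r ((σ⁻¹ i : Fin r) : ℕ) i
      = Matrix.det (Matrix.of fun k j : Fin r => touch r (k:ℕ) j) := by
    rw [Matrix.det_apply]
    rw [← Equiv.sum_comp (Equiv.inv (Equiv.Perm (Fin r)))
      (fun σ : Equiv.Perm (Fin r) => Equiv.Perm.sign σ •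
        ∏ i, (Matrix.of fun k j : Fin r => touch r (k:ℕ) j) (σ i) i)]
    apply Finset.sum_congr rfl
    intro σ _
    have hinv : (Equiv.inv (Equiv.Perm (Fin r))) σ = σ⁻¹ := rfl
    rw [hinv, Equiv.Perm.sign_inv]
    congr 1
  rw [h4, det_touch, ← Matrix.det_apply, Matrix.det_vandermonde]

/-! ### Analytic side -/


lemma hasDerivAt_eval_update (r : ℕ) (P : MvPolynomial (Fin r) ℂ) (v : Fin r → ℂ)
    (i : Fin r) (c z : ℂ) :
    HasDerivAt (fun w : ℂ => eval (Function.update v i (c * w)) P)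
      (c * eval (Function.update v i (c * z)) (pderiv i P)) z := by
  induction P using MvPolynomial.induction_on with
  | C a => simpa using hasDerivAt_const z a
  | add p q hp hq =>
    have := hp.fun_add hq
    simpa [map_add, mul_add] using this
  | mul_X p k ih =>
    by_cases hk : k = i
    · subst hk
      have hX : ∀ w : ℂ, eval (Function.update v k (c * w)) (p * X k)
          = eval (Function.update v k (c * w)) p * (c * w) := by
        intro w; simp [Function.update_self]
      have h1 : HasDerivAt (fun w : ℂ => eval (Function.update v k (c * w)) p * (c * w))
          ((c * eval (Function.update v k (c * z)) (pderiv k p)) * (c * z)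
            + eval (Function.update v k (c * z)) p * c) z := by
        have hg : HasDerivAt (fun w : ℂ => c * w) c z := by
          simpa using (hasDerivAt_id z).const_mul c
        exact ih.mul hg
      have h2 : HasDerivAt (fun w : ℂ => eval (Function.update v k (c * w)) (p * X k))
          ((c * eval (Function.update v k (c * z)) (pderiv k p)) * (c * z)
            + eval (Function.update v k (c * z)) p * c) z := by
        apply h1.congr_of_eventuallyEq
        filter_upwards with w using (hX w)
      convert h2 using 1
      simp [pderiv_mul, pderiv_X_self, Function.update_self]
      ring
    · have hX : ∀ w : ℂ, eval (Function.update v i (c * w)) (p * X k)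
          = eval (Function.update v i (c * w)) p * v k := by
        intro w
        simp [Function.update_of_ne hk]
      have h1 : HasDerivAt (fun w : ℂ => eval (Function.update v i (c * w)) p * v k)
          ((c * eval (Function.update v i (c * z)) (pderiv i p)) * v k) z := ih.mul_const (v k)
      have h2 : HasDerivAt (fun w : ℂ => eval (Function.update v i (c * w)) (p * X k))
          ((c * eval (Function.update v i (c * z)) (pderiv i p)) * v k) z := by
        apply h1.congr_of_eventuallyEq
        filter_upwards with w using (hX w)
      convert h2 using 1
      simp [pderiv_mul, pderiv_X_of_ne (fun h => hk h), Function.update_of_ne hk]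
      ring

lemma thetaOp_Phi (r : ℕ) (α : Fin r → ℂ) (i : Fin r) (P : MvPolynomial (Fin r) ℂ) :
    thetaOp r i
        (fun t => Complex.exp (∑ k, α k * t k) * eval (fun k => α k * t k) P)
      = fun t => Complex.exp (∑ k, α k * t k) * eval (fun k => α k * t k) (deltaL r i P) := by
  funext t
  set v : Fin r → ℂ := fun k => α k * t k with hv
  have hupd : ∀ z : ℂ, (fun k => α k * Function.update t i z k)
      = Function.update v i (α i * z) := by
    intro z; funext k
    rcases eq_or_ne k i with rfl | hk
    · simp
    · simp [Function.update_of_ne hk, hv]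
  set Ci : ℂ := ∑ k ∈ Finset.univ.erase i, α k * t k with hCi
  have hsum : ∀ z : ℂ, (∑ k, α k * Function.update t i z k) = α i * z + Ci := by
    intro z
    calc ∑ k, α k * Function.update t i z k
        = ∑ k, Function.update v i (α i * z) k := by rw [hupd z]
      _ = α i * z + Ci := by
          rw [Finset.sum_update_of_mem (Finset.mem_univ i), Finset.sdiff_singleton_eq_erase]
  -- the function of z appearing inside deriv
  have hfun : (fun z : ℂ => Complex.exp (∑ k, α k * Function.update t i z k)
        * eval (fun k => α k * Function.update t i z k) P)
      = fun z : ℂ => Complex.exp (α i * z + Ci) * eval (Function.update v i (α i * z)) P := by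
    funext z
    rw [hsum z, hupd z]
  have hE : HasDerivAt (fun z : ℂ => Complex.exp (α i * z + Ci))
      (Complex.exp (α i * t i + Ci) * α i) (t i) := by
    have h0 : HasDerivAt (fun z : ℂ => α i * z + Ci) (α i) (t i) := by
      simpa using ((hasDerivAt_id (t i)).const_mul (α i)).add_const Ci
    simpa using h0.cexp
  have hQ := hasDerivAt_eval_update r P v i (α i) (t i)
  have hprod := hE.fun_mul hQ
  have hfix : Function.update v i (α i * t i) = v := by
    have : α i * t i = v i := rfl
    rw [this, Function.update_eq_self]
  have hS : α i * t i + Ci = ∑ k, α k * t k := (hsum (t i)).symm.trans (by simp)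
  rw [thetaOp]
  rw [hfun]
  rw [hprod.deriv]
  rw [hfix] at *
  rw [hS]
  rw [deltaL_apply, map_add, map_mul, map_mul, eval_X]
  ring

lemma key_transfer (r : ℕ) (α : Fin r → ℂ) (L : List (Fin r × Fin r))
    (P : MvPolynomial (Fin r) ℂ) :
    L.foldr (fun p h => fun t => thetaOp r p.1 h t - thetaOp r p.2 h t)
        (fun t : Fin r → ℂ =>
          Complex.exp (∑ k, α k * t k) * eval (fun k => α k * t k) P)
      = fun t : Fin r → ℂ => Complex.exp (∑ k, α k * t k) *
          eval (fun k => α k * t k)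
            (L.foldr (fun p Q => deltaL r p.1 Q - deltaL r p.2 Q) P) := by
  induction L with
  | nil => rfl
  | cons a L ih =>
    rw [List.foldr_cons, ih, List.foldr_cons]
    funext t
    have h1 := congrFun (thetaOp_Phi r α a.1
      (L.foldr (fun p Q => deltaL r p.1 Q - deltaL r p.2 Q) P)) t
    have h2 := congrFun (thetaOp_Phi r α a.2
      (L.foldr (fun p Q => deltaL r p.1 Q - deltaL r p.2 Q) P)) t
    show thetaOp r a.1 _ t - thetaOp r a.2 _ t = _
    rw [h1, h2, map_sub, mul_sub]

/-- Applying the pairwise-difference operators `(D_i − D_j)` (where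
`D_i = t_i·∂/∂t_i`), composed in lexicographic order over all pairs `i < j`,
to `F(t) = exp(∑ α_i t_i)` yields
`exp(∑ α_i t_i) · ∏_{i<j} (α_i t_i − α_j t_j)`. -/
theorem antisym_derivation (r : ℕ) (hr : 1 ≤ r) (α : Fin r → ℂ) :
    (lexPairs r).foldr
        (fun p h => fun t => thetaOp r p.1 h t - thetaOp r p.2 h t)
        (fun t : Fin r → ℂ => Complex.exp (∑ i : Fin r, α i * t i)) =
      fun t : Fin r → ℂ =>
        Complex.exp (∑ i : Fin r, α i * t i) *
          ∏ p ∈ Finset.univ.filter (fun p : Fin r × Fin r => p.1 < p.2),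
            (α p.1 * t p.1 - α p.2 * t p.2) := by
  have base : (fun t : Fin r → ℂ => Complex.exp (∑ i : Fin r, α i * t i))
      = fun t : Fin r → ℂ => Complex.exp (∑ k, α k * t k)
          * eval (fun k => α k * t k) (1 : MvPolynomial (Fin r) ℂ) := by
    funext t; simp
  rw [base, key_transfer r α (lexPairs r) 1, fold_poly r]
  funext t
  congr 1
  rw [map_prod]
  apply Finset.prod_congr rfl
  intro p _
  rw [map_sub, eval_X, eval_X]
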